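/- arXiv:1510.05130 — 4 statements merged into one kernel-verified Lean document; each statement's English description precedes it below -/
import Mathlib

section
/- Let A = [a_ij] ∈ ℂ^{n×n}, n ≥ 2, be a DD matrix. Then A is an H-matrix if and only if A has nonzero diagonal entries and T(A) is an interwoven set of indices for A. -/
open scoped BigOperators

noncomputable section

/-- Deleted `i`-th row sum of `|A|`, restricted to the index set `S`
    (i.e. `r_i^S(A) = ∑_{j ∈ S \ {i}} |a_{ij}|`). -/
def rowSumOn {ι : Type*} [Fintype ι] [DecidableEq ι]
    (A : Matrix ι ι ℂ) (S : Finset ι) (i : ι) : ℝ :=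
  ∑ j ∈ S.erase i, ‖A i j‖

/-- Deleted `i`-th row sum `r_i(A) = ∑_{j ≠ i} |a_{ij}|`. -/
def rowSum {ι : Type*} [Fintype ι] [DecidableEq ι]
    (A : Matrix ι ι ℂ) (i : ι) : ℝ :=
  rowSumOn A Finset.univ i

/-- `A` is strictly diagonally dominant (SDD). -/
def IsSDD {ι : Type*} [Fintype ι] [DecidableEq ι] (A : Matrix ι ι ℂ) : Prop :=
  ∀ i, rowSum A i < ‖A i i‖

/-- `A` is diagonally dominant (DD). -/
def IsDD {ι : Type*} [Fintype ι] [DecidableEq ι] (A : Matrix ι ι ℂ) : Prop :=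
  ∀ i, rowSum A i ≤ ‖A i i‖

/-- `A` is DD+ : diagonally dominant with at least one strictly dominant row. -/
def IsDDplus {ι : Type*} [Fintype ι] [DecidableEq ι] (A : Matrix ι ι ℂ) : Prop :=
  IsDD A ∧ ∃ i, rowSum A i < ‖A i i‖

/-- `A` is an H-matrix: there is a diagonal matrix `D` with positive diagonal
    entries such that `A * D` is SDD. -/
def IsHMatrix {ι : Type*} [Fintype ι] [DecidableEq ι] (A : Matrix ι ι ℂ) : Prop :=
  ∃ d : ι → ℝ, (∀ i, 0 < d i) ∧ IsSDD (A * Matrix.diagonal fun i => (d i : ℂ))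

/-- `T(A)`: the set of indices of non-SDD rows of `A`. -/
def TSet {ι : Type*} [Fintype ι] [DecidableEq ι] (A : Matrix ι ι ℂ) : Finset ι :=
  Finset.univ.filter fun i => ‖A i i‖ ≤ rowSum A i

/-- The principal submatrix `A|_{M²}` of `A` corresponding to the index set `M`. -/
def subMat {ι : Type*} [Fintype ι] [DecidableEq ι]
    (A : Matrix ι ι ℂ) (M : Finset ι) : Matrix {i // i ∈ M} {i // i ∈ M} ℂ :=
  Matrix.of fun i j => A i.val j.val

/-- There exists a nonzero elements chain `a_{i₀i₁}, a_{i₁i₂}, …, a_{i_{r-1}i_r}`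
    starting at `i₀` and ending at some `i_r ∉ T(A)`. -/
def HasChainOut {ι : Type*} [Fintype ι] [DecidableEq ι]
    (A : Matrix ι ι ℂ) (i₀ : ι) : Prop :=
  ∃ (r : ℕ) (c : Fin (r + 1) → ι), 0 < r ∧ c 0 = i₀ ∧
    (∀ k : Fin r, A (c k.castSucc) (c k.succ) ≠ 0) ∧ c (Fin.last r) ∉ TSet A

/-- `S` is an interwoven set of indices for `A`: `S` is a proper subset of `N`
    and either `|S| ≤ 1`, or `|S| = s > 1` and there exist distinct
    `p₁,…,p_{s-1} ∈ S` and `q₁,…,q_{s-1}` with `q₁ ∈ N \ S`, `a_{p₁q₁} ≠ 0`, and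
    `q_i ∈ (N \ S) ∪ {p₁,…,p_{i-1}}`, `a_{p_iq_i} ≠ 0` for `i = 2,…,s-1`. -/
def Interwoven {ι : Type*} [Fintype ι] [DecidableEq ι]
    (A : Matrix ι ι ℂ) (S : Finset ι) : Prop :=
  S ⊂ Finset.univ ∧
    (S.card ≤ 1 ∨
      (1 < S.card ∧ ∃ p q : Fin (S.card - 1) → ι,
        Function.Injective p ∧ (∀ i, p i ∈ S) ∧
        ∀ i, A (p i) (q i) ≠ 0 ∧ (q i ∉ S ∨ ∃ j, j < i ∧ q i = p j)))

/-- The comparison matrix `ℳ(A)`. -/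
def CompMat {ι : Type*} [Fintype ι] [DecidableEq ι] (A : Matrix ι ι ℂ) : Matrix ι ι ℝ :=
  Matrix.of fun i j => if i = j then ‖A i i‖ else -‖A i j‖


namespace DDwork

variable {ι : Type*} [Fintype ι] [DecidableEq ι]

lemma rowSum_nonneg (A : Matrix ι ι ℂ) (i : ι) : 0 ≤ rowSum A i :=
  Finset.sum_nonneg fun j _ => norm_nonneg _

lemma mem_TSet {A : Matrix ι ι ℂ} {i : ι} :
    i ∈ TSet A ↔ ‖A i i‖ ≤ rowSum A i := by
  simp [TSet]

lemma not_mem_TSet {A : Matrix ι ι ℂ} {i : ι} :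
    i ∉ TSet A ↔ rowSum A i < ‖A i i‖ := by
  simp [TSet]

lemma mulDiag_apply (A : Matrix ι ι ℂ) (d : ι → ℝ) (i j : ι) :
    (A * Matrix.diagonal fun k => (d k : ℂ)) i j = A i j * (d j : ℂ) :=
  Matrix.mul_diagonal _ _ _ _

lemma abs_mulDiag (A : Matrix ι ι ℂ) {d : ι → ℝ} (hd : ∀ i, 0 ≤ d i) (i j : ι) :
    ‖(A * Matrix.diagonal fun k => (d k : ℂ)) i j‖
      = ‖A i j‖ * d j := by
  rw [mulDiag_apply, norm_mul, Complex.norm_real, Real.norm_eq_abs, abs_of_nonneg (hd j)]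

lemma rowSum_mulDiag (A : Matrix ι ι ℂ) {d : ι → ℝ} (hd : ∀ i, 0 ≤ d i) (i : ι) :
    rowSum (A * Matrix.diagonal fun k => (d k : ℂ)) i
      = ∑ j ∈ Finset.univ.erase i, ‖A i j‖ * d j := by
  unfold rowSum rowSumOn
  exact Finset.sum_congr rfl fun j _ => abs_mulDiag A hd i j

/-- A one-step chain. -/
lemma chain_single {A : Matrix ι ι ℂ} {i j : ι} (hij : A i j ≠ 0)
    (hj : j ∉ TSet A) : HasChainOut A i := by
  refine ⟨1, fun k => if k = 0 then i else j, one_pos, by simp, ?_, ?_⟩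
  · intro k
    have hk : k = 0 := Subsingleton.elim _ _
    subst hk
    have h1 : ((0 : Fin 1).succ : Fin 2) ≠ 0 := by decide
    have h0 : ((0 : Fin 1).castSucc : Fin 2) = 0 := rfl
    simpa [h0, h1] using hij
  · have h1 : (Fin.last 1 : Fin 2) ≠ 0 := by decide
    simpa [h1] using hj

/-- Prepend a step to a chain. -/
lemma chain_prepend {A : Matrix ι ι ℂ} {x y : ι} (h : HasChainOut A x)
    (hyx : A y x ≠ 0) : HasChainOut A y := by
  obtain ⟨r, c, hr, hc0, hstep, hend⟩ := h
  refine ⟨r + 1, Fin.cases y c, Nat.succ_pos _, by simp, ?_, ?_⟩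
  · intro k
    induction k using Fin.cases with
    | zero =>
      show A (Fin.cases y c (Fin.castSucc 0)) (Fin.cases y c (Fin.succ 0)) ≠ 0
      rw [Fin.castSucc_zero, Fin.cases_zero, Fin.cases_succ, hc0]
      exact hyx
    | succ j =>
      show A (Fin.cases y c j.succ.castSucc) (Fin.cases y c j.succ.succ) ≠ 0
      rw [← Fin.succ_castSucc, Fin.cases_succ, Fin.cases_succ]
      exact hstep j
  · show Fin.cases y c (Fin.last r).succ ∉ TSet A
    rw [Fin.cases_succ]
    exact hend

/-- Transfer chains along matrices with the same nonzero pattern and smaller TSet. -/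
lemma chain_transfer {A B : Matrix ι ι ℂ}
    (hpat : ∀ i j, A i j ≠ 0 → B i j ≠ 0) (hT : TSet B ⊆ TSet A)
    {i : ι} (h : HasChainOut A i) : HasChainOut B i := by
  obtain ⟨r, c, hr, hc0, hstep, hend⟩ := h
  exact ⟨r, c, hr, hc0, fun k => hpat _ _ (hstep k), fun hc => hend (hT hc)⟩

/-- In a row of `TSet` with nonzero diagonal there is a nonzero off-diagonal entry. -/
lemma exists_offdiag {A : Matrix ι ι ℂ} {t : ι} (ht : t ∈ TSet A)
    (hdiag : A t t ≠ 0) : ∃ j, j ≠ t ∧ A t j ≠ 0 := by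
  have hpos : 0 < rowSum A t :=
    lt_of_lt_of_le (norm_pos_iff.mpr hdiag) (mem_TSet.mp ht)
  by_contra h
  push_neg at h
  have hz : rowSum A t = 0 := by
    unfold rowSum rowSumOn
    refine Finset.sum_eq_zero fun j hj => ?_
    have hjt : j ≠ t := Finset.ne_of_mem_erase hj
    rw [h j hjt, norm_zero]
  exact absurd hz (ne_of_gt hpos)

/-- From an interwoven `TSet` and nonzero diagonal, every row of `TSet`
has a chain of nonzero entries leading out of `TSet`. -/
lemma interwoven_chains {A : Matrix ι ι ℂ} (hdiag : ∀ i, A i i ≠ 0)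
    (hI : Interwoven A (TSet A)) : ∀ i ∈ TSet A, HasChainOut A i := by
  obtain ⟨-, h1 | ⟨hs, p, q, hpinj, hpmem, hpq⟩⟩ := hI
  · -- `TSet A` has at most one element
    intro t ht
    obtain ⟨j, hjt, hAtj⟩ := exists_offdiag ht (hdiag t)
    have hjT : j ∉ TSet A := fun hj => hjt (Finset.card_le_one.mp h1 j hj t ht)
    exact chain_single hAtj hjT
  · -- chains for all the `p m`
    have key : ∀ v : ℕ, ∀ m : Fin ((TSet A).card - 1), m.val ≤ v → HasChainOut A (p m) := by
      intro v
      induction v with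
      | zero =>
        intro m hm
        rcases (hpq m).2 with hq | ⟨j, hj, _⟩
        · exact chain_single (hpq m).1 hq
        · exact absurd (Fin.lt_def.mp hj) (by omega)
      | succ v ih =>
        intro m hm
        rcases (hpq m).2 with hq | ⟨j, hj, hqe⟩
        · exact chain_single (hpq m).1 hq
        · have hc := ih j (by have := Fin.lt_def.mp hj; omega)
          exact chain_prepend hc (hqe ▸ (hpq m).1)
    have keyp : ∀ m : Fin ((TSet A).card - 1), HasChainOut A (p m) := fun m => key m.val m le_rfl
    intro t ht
    by_cases htp : ∃ m, p m = t
    · obtain ⟨m, rfl⟩ := htp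
      exact keyp m
    · push_neg at htp
      -- `t` is the unique element of `TSet A` not in the range of `p`
      set I : Finset ι := Finset.image p Finset.univ with hI_def
      have hIsub : I ⊆ TSet A := by
        intro x hx
        obtain ⟨m, -, rfl⟩ := Finset.mem_image.mp hx
        exact hpmem m
      have hIcard : I.card = (TSet A).card - 1 := by
        rw [hI_def, Finset.card_image_of_injective _ hpinj, Finset.card_univ,
          Fintype.card_fin]
      have hdcard : (TSet A \ I).card = 1 := by
        rw [Finset.card_sdiff_of_subset hIsub, hIcard]
        omega
      obtain ⟨a, ha⟩ := Finset.card_eq_one.mp hdcard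
      have hta : t = a := by
        have : t ∈ TSet A \ I := by
          rw [Finset.mem_sdiff]
          refine ⟨ht, fun htI => ?_⟩
          obtain ⟨m, -, hm⟩ := Finset.mem_image.mp htI
          exact htp m hm
        rw [ha, Finset.mem_singleton] at this
        exact this
      obtain ⟨j, hjt, hAtj⟩ := exists_offdiag ht (hdiag t)
      by_cases hjT : j ∈ TSet A
      · have hjI : j ∈ I := by
          by_contra hjI
          have : j ∈ TSet A \ I := Finset.mem_sdiff.mpr ⟨hjT, hjI⟩
          rw [ha, Finset.mem_singleton] at this
          exact hjt (this.trans hta.symm)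
        obtain ⟨m, -, hm⟩ := Finset.mem_image.mp hjI
        exact chain_prepend (hm ▸ keyp m) (hm ▸ hAtj)
      · exact chain_single hAtj hjT

lemma hmatrix_of_empty {A : Matrix ι ι ℂ} (hT : TSet A = ∅) : IsHMatrix A := by
  refine ⟨fun _ => 1, fun _ => one_pos, ?_⟩
  have h1 : (Matrix.diagonal fun _ : ι => (((1:ℝ)) : ℂ)) = 1 := by
    norm_num
  rw [h1, mul_one]
  intro i
  have hi : i ∉ TSet A := by simp [hT]
  exact not_mem_TSet.mp hi

lemma hmatrix_of_chains : ∀ k : ℕ, ∀ A : Matrix ι ι ℂ, IsDD A → (∀ i, A i i ≠ 0) →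
    (∀ i ∈ TSet A, HasChainOut A i) → (TSet A).card ≤ k → IsHMatrix A := by
  intro k
  induction k with
  | zero =>
    intro A _ _ _ hc
    exact hmatrix_of_empty (Finset.card_eq_zero.mp (Nat.le_zero.mp hc))
  | succ k ih =>
    intro A hDD hdiag hch hcard
    by_cases hTe : TSet A = ∅
    · exact hmatrix_of_empty hTe
    obtain ⟨i₀, hi₀⟩ := Finset.nonempty_iff_ne_empty.mpr hTe
    obtain ⟨r, c, hr, hc0, hstep, hend⟩ := hch i₀ hi₀
    -- find the last chain index inside `TSet A`
    have hKne : (Finset.univ.filter fun m : Fin (r+1) => c m ∈ TSet A).Nonempty :=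
      ⟨0, by simp [hc0, hi₀]⟩
    obtain ⟨km, hkmK, hkmax⟩ :
        ∃ km ∈ Finset.univ.filter fun m : Fin (r+1) => c m ∈ TSet A,
          ∀ x ∈ Finset.univ.filter fun m : Fin (r+1) => c m ∈ TSet A, x ≤ km :=
      ⟨_, Finset.max'_mem _ hKne, fun x hx => Finset.le_max' _ x hx⟩
    have hkmT : c km ∈ TSet A := (Finset.mem_filter.mp hkmK).2
    have hkmlt : km.val < r := by
      rcases lt_or_eq_of_le (Nat.lt_succ_iff.mp km.isLt) with h | h
      · exact h
      · exact absurd (show c (Fin.last r) ∈ TSet A from (Fin.ext h : km = Fin.last r) ▸ hkmT) hend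
    have hApq : A (c km) (c (⟨km.val, hkmlt⟩ : Fin r).succ) ≠ 0 := by
      have hcast : (⟨km.val, hkmlt⟩ : Fin r).castSucc = km := Fin.ext rfl
      have h0 := hstep ⟨km.val, hkmlt⟩
      rwa [hcast] at h0
    have hqT : c (⟨km.val, hkmlt⟩ : Fin r).succ ∉ TSet A := by
      intro hmem
      have hin : (⟨km.val, hkmlt⟩ : Fin r).succ ∈
          Finset.univ.filter fun m : Fin (r+1) => c m ∈ TSet A :=
        Finset.mem_filter.mpr ⟨Finset.mem_univ _, hmem⟩
      have hle : km.val + 1 ≤ km.val := by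
        simpa [Fin.le_def, Fin.val_succ] using hkmax _ hin
      omega
    set p := c km with hp
    set q := c (⟨km.val, hkmlt⟩ : Fin r).succ with hq
    have hpT : p ∈ TSet A := hkmT
    have hqlt : rowSum A q < ‖A q q‖ := not_mem_TSet.mp hqT
    have hpq_ne : p ≠ q := fun h => hqT (h ▸ hpT)
    have hrq_nonneg : 0 ≤ rowSum A q := rowSum_nonneg A q
    have haq_pos : 0 < ‖A q q‖ := lt_of_le_of_lt hrq_nonneg hqlt
    set δ := (‖A q q‖ - rowSum A q) / (2 * ‖A q q‖) with hδ
    have hδ_pos : 0 < δ := div_pos (by linarith) (by linarith)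
    have hδ_lt : δ < 1 := by
      rw [hδ, div_lt_one (by linarith)]
      linarith
    set w : ι → ℝ := fun j => if j = q then 1 - δ else 1 with hw
    have hw_pos : ∀ j, 0 < w j := by
      intro j
      by_cases h : j = q <;> simp [hw, h] <;> linarith
    have hw_le : ∀ j, w j ≤ 1 := by
      intro j
      by_cases h : j = q <;> simp [hw, h] <;> linarith
    have hw_nonneg : ∀ j, 0 ≤ w j := fun j => (hw_pos j).le
    set A' := A * Matrix.diagonal (fun j => ((w j : ℝ) : ℂ)) with hA'
    have hA'app : ∀ i j, A' i j = A i j * (w j : ℂ) := fun i j => mulDiag_apply A w i j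
    have habs : ∀ i j, ‖A' i j‖ = ‖A i j‖ * w j :=
      abs_mulDiag A hw_nonneg
    have hrow : ∀ i, rowSum A' i = ∑ j ∈ Finset.univ.erase i, ‖A i j‖ * w j :=
      rowSum_mulDiag A hw_nonneg
    have hrsum : ∀ i, rowSum A i = ∑ j ∈ Finset.univ.erase i, ‖A i j‖ :=
      fun _ => rfl
    have hrow_le : ∀ i, rowSum A' i ≤ rowSum A i := by
      intro i
      rw [hrow, hrsum]
      refine Finset.sum_le_sum fun j _ => ?_
      exact mul_le_of_le_one_right (norm_nonneg _) (hw_le j)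
    have hdiagA' : ∀ i, i ≠ q → ‖A' i i‖ = ‖A i i‖ := by
      intro i h
      rw [habs]
      simp [hw, h]
    have hnotq : ∀ i, i ∉ TSet A → i ≠ q → i ∉ TSet A' := by
      intro i hi h
      rw [not_mem_TSet] at hi ⊢
      rw [hdiagA' i h]
      exact lt_of_le_of_lt (hrow_le i) hi
    have hqA' : q ∉ TSet A' := by
      rw [not_mem_TSet]
      have h1 : ‖A' q q‖ = ‖A q q‖ * (1 - δ) := by
        rw [habs]
        simp [hw]
      have h2 : ‖A q q‖ * δ = (‖A q q‖ - rowSum A q) / 2 := by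
        rw [hδ]
        field_simp
      have h3 : rowSum A q < ‖A q q‖ * (1 - δ) := by nlinarith
      rw [h1]
      exact lt_of_le_of_lt (hrow_le q) h3
    have hpA' : p ∉ TSet A' := by
      rw [not_mem_TSet, hdiagA' p hpq_ne, hrow]
      have hq_mem : q ∈ Finset.univ.erase p :=
        Finset.mem_erase.mpr ⟨hpq_ne.symm, Finset.mem_univ q⟩
      have key : ∑ j ∈ Finset.univ.erase p, ‖A p j‖ * w j
          < ∑ j ∈ Finset.univ.erase p, ‖A p j‖ := by
        refine Finset.sum_lt_sum (fun j _ => mul_le_of_le_one_right (norm_nonneg _) (hw_le j)) ⟨q, hq_mem, ?_⟩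
        have hwq : w q = 1 - δ := by simp [hw]
        rw [hwq]
        have habs_pos : 0 < ‖A p q‖ := norm_pos_iff.mpr hApq
        nlinarith
      calc ∑ j ∈ Finset.univ.erase p, ‖A p j‖ * w j
          < ∑ j ∈ Finset.univ.erase p, ‖A p j‖ := key
        _ = rowSum A p := (hrsum p).symm
        _ ≤ ‖A p p‖ := hDD p
    have hTsub : TSet A' ⊆ TSet A := by
      intro i hi
      by_contra h
      by_cases hiq : i = q
      · exact hqA' (hiq ▸ hi)
      · exact hnotq i h hiq hi
    have hTsub2 : TSet A' ⊆ (TSet A).erase p := by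
      intro i hi
      refine Finset.mem_erase.mpr ⟨?_, hTsub hi⟩
      rintro rfl
      exact hpA' hi
    have hcard' : (TSet A').card ≤ k := by
      have h1 := Finset.card_le_card hTsub2
      have h2 : ((TSet A).erase p).card = (TSet A).card - 1 := Finset.card_erase_of_mem hpT
      have h3 : 0 < (TSet A).card := Finset.card_pos.mpr ⟨i₀, hi₀⟩
      omega
    have hDD' : IsDD A' := by
      intro i
      by_cases hiq : i = q
      · subst hiq
        exact (not_mem_TSet.mp hqA').le
      · rw [hdiagA' i hiq]
        exact (hrow_le i).trans (hDD i)
    have hwC : ∀ j, ((w j : ℝ) : ℂ) ≠ 0 := by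
      intro j
      exact_mod_cast (hw_pos j).ne'
    have hdiag' : ∀ i, A' i i ≠ 0 := by
      intro i
      rw [hA'app]
      exact mul_ne_zero (hdiag i) (hwC i)
    have hch' : ∀ i ∈ TSet A', HasChainOut A' i := by
      intro i hi
      refine chain_transfer (fun a b hab => ?_) hTsub (hch i (hTsub hi))
      rw [hA'app]
      exact mul_ne_zero hab (hwC b)
    obtain ⟨d', hd', hSDD'⟩ := ih A' hDD' hdiag' hch' hcard'
    refine ⟨fun i => w i * d' i, fun i => mul_pos (hw_pos i) (hd' i), ?_⟩
    have heq : (A * Matrix.diagonal fun i => ((w i * d' i : ℝ) : ℂ))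
        = A' * Matrix.diagonal fun i => ((d' i : ℝ) : ℂ) := by
      rw [hA', Matrix.mul_assoc, Matrix.diagonal_mul_diagonal]
      congr 1
      funext i
      push_cast
      ring
    rw [heq]
    exact hSDD'

/-- Descent lemma: in a `TSet` row of an H-matrix, the scaling factor must
strictly decrease along some nonzero entry. -/
lemma descent {A : Matrix ι ι ℂ} {d : ι → ℝ} (hd : ∀ i, 0 < d i)
    (hSDD : IsSDD (A * Matrix.diagonal fun i => (d i : ℂ)))
    {i : ι} (hi : i ∈ TSet A) : ∃ j, A i j ≠ 0 ∧ d j < d i ∧ j ≠ i := by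
  by_contra h
  push_neg at h
  have key := hSDD i
  rw [rowSum_mulDiag A (fun j => (hd j).le), abs_mulDiag A (fun j => (hd j).le)] at key
  have h1 : rowSum A i * d i ≤ ∑ j ∈ Finset.univ.erase i, ‖A i j‖ * d j := by
    have hs : rowSum A i * d i = ∑ j ∈ Finset.univ.erase i, ‖A i j‖ * d i :=
      Finset.sum_mul _ _ _
    rw [hs]
    refine Finset.sum_le_sum fun j hj => ?_
    by_cases hz : A i j = 0
    · simp [hz]
    · have hji : j ≠ i := Finset.ne_of_mem_erase hj
      have hdle : d i ≤ d j := by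
        by_contra hlt
        push_neg at hlt
        exact hji (h j hz hlt)
      exact mul_le_mul_of_nonneg_left hdle (norm_nonneg _)
  have h2 : ‖A i i‖ * d i ≤ rowSum A i * d i :=
    mul_le_mul_of_nonneg_right (mem_TSet.mp hi) (hd i).le
  linarith

lemma necessity [LinearOrder ι] [Nonempty ι]
    {A : Matrix ι ι ℂ} (hH : IsHMatrix A) :
    (∀ i, A i i ≠ 0) ∧ Interwoven A (TSet A) := by
  classical
  obtain ⟨d, hd, hSDD⟩ := hH
  have hdiag : ∀ i, A i i ≠ 0 := by
    intro i hz
    have key := hSDD i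
    have habs0 : ‖(A * Matrix.diagonal fun k => ((d k : ℝ) : ℂ)) i i‖ = 0 := by
      rw [abs_mulDiag A (fun j => (hd j).le), hz]
      simp
    rw [habs0] at key
    exact absurd key (not_lt.mpr (rowSum_nonneg _ i))
  have hTne : TSet A ≠ Finset.univ := by
    intro hT
    obtain ⟨i, -, hmin⟩ := Finset.exists_min_image Finset.univ d Finset.univ_nonempty
    have hiT : i ∈ TSet A := by rw [hT]; exact Finset.mem_univ i
    obtain ⟨j, hAij, hdj, hji⟩ := descent hd hSDD hiT
    exact absurd (hmin j (Finset.mem_univ j)) (not_le.mpr hdj)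
  refine ⟨hdiag, Finset.ssubset_univ_iff.mpr hTne, ?_⟩
  by_cases hcard : (TSet A).card ≤ 1
  · exact Or.inl hcard
  push_neg at hcard
  refine Or.inr ⟨hcard, ?_⟩
  -- sort `TSet A` by `d` (ties broken by the linear order on `ι`)
  let rel : ι → ι → Prop := fun a b => d a < d b ∨ (d a = d b ∧ a ≤ b)
  haveI hdec : DecidableRel rel := fun a b => Classical.dec _
  haveI : IsTrans ι rel := ⟨by
    rintro a b e (h1 | ⟨h1, h1'⟩) (h2 | ⟨h2, h2'⟩)
    · exact Or.inl (h1.trans h2)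
    · exact Or.inl (by rw [← h2]; exact h1)
    · exact Or.inl (by rw [h1]; exact h2)
    · exact Or.inr ⟨h1.trans h2, h1'.trans h2'⟩⟩
  haveI : IsAntisymm ι rel := ⟨by
    rintro a b (h1 | ⟨h1, h1'⟩) (h2 | ⟨h2, h2'⟩)
    · exact absurd (h1.trans h2) (lt_irrefl _)
    · exact absurd h1 (by rw [h2]; exact lt_irrefl _)
    · exact absurd h2 (by rw [h1]; exact lt_irrefl _)
    · exact le_antisymm h1' h2'⟩
  haveI : IsTotal ι rel := ⟨by
    intro a b
    rcases lt_trichotomy (d a) (d b) with h | h | h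
    · exact Or.inl (Or.inl h)
    · exact (le_total a b).imp (fun hh => Or.inr ⟨h, hh⟩) (fun hh => Or.inr ⟨h.symm, hh⟩)
    · exact Or.inr (Or.inl h)⟩
  set l := (TSet A).sort rel with hl
  have hlen : l.length = (TSet A).card := Finset.length_sort rel
  have hsorted : l.Pairwise rel := Finset.pairwise_sort _ rel
  have hnodup : l.Nodup := Finset.sort_nodup _ rel
  have hidx : ∀ m : Fin ((TSet A).card - 1), m.val < l.length := by
    intro m
    have := m.isLt
    omega
  have hpmem : ∀ m : Fin ((TSet A).card - 1), l.get ⟨m.val, hidx m⟩ ∈ TSet A :=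
    fun m => (Finset.mem_sort rel).mp (l.get_mem _)
  choose f hf1 hf2 hf3 using fun m : Fin ((TSet A).card - 1) => descent hd hSDD (hpmem m)
  refine ⟨fun m => l.get ⟨m.val, hidx m⟩, f, ?_, hpmem, ?_⟩
  · intro a b hab
    have h := (hnodup.get_inj_iff).mp hab
    have hv : (a : ℕ) = b := by
      have := congrArg (fun x : Fin l.length => (x : ℕ)) h
      simpa using this
    exact Fin.ext hv
  · intro m
    refine ⟨hf1 m, ?_⟩
    by_cases hqT : f m ∈ TSet A
    · right
      obtain ⟨mm, hmm⟩ := List.mem_iff_get.mp ((Finset.mem_sort rel).mpr hqT)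
      have hlt : mm.val < m.val := by
        rcases lt_trichotomy mm.val m.val with h | h | h
        · exact h
        · exfalso
          have he : f m = l.get ⟨m.val, hidx m⟩ := by
            rw [← hmm]
            congr 1
            exact Fin.ext h
          have hcon := hf2 m
          rw [he] at hcon
          exact lt_irrefl _ hcon
        · exfalso
          have hrel : rel (l.get ⟨m.val, hidx m⟩) (l.get mm) :=
            List.Pairwise.rel_get_of_lt hsorted (Fin.lt_def.mpr h)
          have hle : d (l.get ⟨m.val, hidx m⟩) ≤ d (l.get mm) := by
            rcases hrel with h' | ⟨h', -⟩
            · exact h'.le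
            · exact h'.le
          rw [hmm] at hle
          exact absurd (hf2 m) (not_lt.mpr hle)
      refine ⟨⟨mm.val, by omega⟩, Fin.lt_def.mpr hlt, ?_⟩
      rw [← hmm]
    · exact Or.inl hqT

end DDwork

/-- A DD matrix `A ∈ ℂⁿˣⁿ`, `n ≥ 2`, is an H-matrix iff `A`
has nonzero diagonal entries and `T(A)` is an interwoven set of indices
for `A`. -/
theorem dd_hmatrix_iff_interwoven (n : ℕ) (hn : 2 ≤ n)
    (A : Matrix (Fin n) (Fin n) ℂ) (hDD : IsDD A) :
    IsHMatrix A ↔ ((∀ i, A i i ≠ 0) ∧ Interwoven A (TSet A)) := by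
  haveI : Nonempty (Fin n) := ⟨⟨0, by omega⟩⟩
  constructor
  · intro hH
    exact DDwork.necessity hH
  · rintro ⟨hdiag, hI⟩
    exact DDwork.hmatrix_of_chains (TSet A).card A hDD hdiag
      (DDwork.interwoven_chains hdiag hI) le_rfl


end
end

section
/- Let A = [a_ij] ∈ ℂ^{n×n}, n ≥ 2, be a DD matrix. Then A is an H-matrix if and only if T(A) = ∅, or for each i₀ ∈ T(A) there exists a nonzero elements chain a_{i₀i₁}, a_{i₁i₂}, …, a_{i_{r-1}i_r} with i_r ∈ N \ T(A). -/
open scoped BigOperators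

noncomputable section

namespace DDaux

open Finset

variable {ι : Type*} [Fintype ι] [DecidableEq ι]

lemma rowSum_nonneg (A : Matrix ι ι ℂ) (i : ι) : 0 ≤ rowSum A i :=
  Finset.sum_nonneg fun j _ => norm_nonneg _

lemma absMulDiag (A : Matrix ι ι ℂ) (d : ι → ℝ) (hd : ∀ i, 0 ≤ d i) (i j : ι) :
    ‖(A * Matrix.diagonal fun k => (d k : ℂ)) i j‖
      = ‖A i j‖ * d j := by
  rw [Matrix.mul_diagonal, norm_mul, Complex.norm_real, Real.norm_eq_abs, abs_of_nonneg (hd j)]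

lemma rowSum_mulDiag (A : Matrix ι ι ℂ) (d : ι → ℝ) (hd : ∀ i, 0 ≤ d i) (i : ι) :
    rowSum (A * Matrix.diagonal fun k => (d k : ℂ)) i
      = ∑ j ∈ univ.erase i, ‖A i j‖ * d j := by
  unfold rowSum rowSumOn
  exact Finset.sum_congr rfl fun j _ => absMulDiag A d hd i j

def ChainLen (A : Matrix ι ι ℂ) (i : ι) (r : ℕ) : Prop :=
  ∃ c : Fin (r + 1) → ι, c 0 = i ∧ (∀ k : Fin r, A (c k.castSucc) (c k.succ) ≠ 0) ∧
    c (Fin.last r) ∉ TSet A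

lemma chainLen_zero_iff (A : Matrix ι ι ℂ) (i : ι) : ChainLen A i 0 ↔ i ∉ TSet A := by
  constructor
  · rintro ⟨c, h0, -, hl⟩
    simpa [Fin.last, show (Fin.last 0) = 0 from rfl, h0] using hl
  · intro h
    exact ⟨fun _ => i, rfl, fun k => k.elim0, by simpa using h⟩

lemma chainLen_cons (A : Matrix ι ι ℂ) {i j : ι} {r : ℕ} (hij : A i j ≠ 0)
    (h : ChainLen A j r) : ChainLen A i (r + 1) := by
  obtain ⟨c, h0, hs, hl⟩ := h
  refine ⟨Fin.cons i c, rfl, ?_, ?_⟩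
  · intro k
    induction k using Fin.cases with
    | zero => simpa [Fin.succ_zero_eq_one, h0] using hij
    | succ k =>
        have h1 : (Fin.cons i c : Fin (r+2) → ι) k.succ.castSucc = c k.castSucc := by
          rw [← Fin.succ_castSucc, Fin.cons_succ]
        have h2 : (Fin.cons i c : Fin (r+2) → ι) k.succ.succ = c k.succ := by
          rw [Fin.cons_succ]
        rw [h1, h2]; exact hs k
  · have : (Fin.last (r+1)) = (Fin.last r).succ := (Fin.succ_last r).symm
    rw [this, Fin.cons_succ]; exact hl

lemma chainLen_tail (A : Matrix ι ι ℂ) {i : ι} {r : ℕ}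
    (h : ChainLen A i (r + 1)) : ∃ j, A i j ≠ 0 ∧ ChainLen A j r := by
  obtain ⟨c, h0, hs, hl⟩ := h
  refine ⟨c 1, ?_, ⟨c ∘ Fin.succ, ?_, ?_, ?_⟩⟩
  · have := hs 0
    simpa [h0, Fin.succ_zero_eq_one] using this
  · simp [Fin.succ_zero_eq_one]
  · intro k
    have := hs k.succ
    have h1 : (k.succ : Fin (r+1)).castSucc = (k.castSucc).succ := (Fin.succ_castSucc k).symm
    simpa [Function.comp, h1] using this
  · have : (Fin.last r).succ = Fin.last (r + 1) := Fin.succ_last r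
    simpa [Function.comp, this] using hl

lemma hasChainOut_iff (A : Matrix ι ι ℂ) (i : ι) :
    HasChainOut A i ↔ ∃ r, 0 < r ∧ ChainLen A i r := by
  constructor
  · rintro ⟨r, c, hr, h0, hs, hl⟩; exact ⟨r, hr, c, h0, hs, hl⟩
  · rintro ⟨r, hr, c, h0, hs, hl⟩; exact ⟨r, c, hr, h0, hs, hl⟩

lemma hasChainOut_of_chainLen (A : Matrix ι ι ℂ) {i : ι} {r : ℕ}
    (hiT : i ∈ TSet A) (h : ChainLen A i r) : HasChainOut A i := by
  rcases r with - | r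
  · exact absurd hiT ((chainLen_zero_iff A i).mp h)
  · exact (hasChainOut_iff A i).mpr ⟨r + 1, Nat.succ_pos r, h⟩

lemma hasChainOut_cons (A : Matrix ι ι ℂ) {i j : ι} (hij : A i j ≠ 0)
    (h : HasChainOut A j) : HasChainOut A i := by
  obtain ⟨r, hr, hc⟩ := (hasChainOut_iff A j).mp h
  exact (hasChainOut_iff A i).mpr ⟨r + 1, Nat.succ_pos r, chainLen_cons A hij hc⟩

lemma hasChainOut_single (A : Matrix ι ι ℂ) {i j : ι} (hij : A i j ≠ 0)
    (hj : j ∉ TSet A) : HasChainOut A i :=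
  (hasChainOut_iff A i).mpr ⟨1, one_pos, chainLen_cons A hij ((chainLen_zero_iff A j).mpr hj)⟩

lemma reach_chain (A : Matrix ι ι ℂ) {i j : ι}
    (h : Relation.ReflTransGen (fun a b => A a b ≠ 0) i j) (hj : j ∉ TSet A) :
    i = j ∨ HasChainOut A i := by
  induction h using Relation.ReflTransGen.head_induction_on with
  | refl => exact Or.inl rfl
  | head hab _ ih =>
      rename_i a c _
      right
      rcases ih with rfl | hc
      · exact hasChainOut_single A hab hj
      · exact hasChainOut_cons A hab hc

lemma mem_TSet_iff (A : Matrix ι ι ℂ) (i : ι) :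
    i ∈ TSet A ↔ ‖A i i‖ ≤ rowSum A i := by
  simp [TSet]

-- Forward direction
lemma forward (A : Matrix ι ι ℂ) (hH : IsHMatrix A) :
    TSet A = ∅ ∨ ∀ i₀ ∈ TSet A, HasChainOut A i₀ := by
  classical
  by_contra h
  push_neg at h
  obtain ⟨-, i₀, hi₀T, hnc⟩ := h
  set R : ι → Prop := fun j => Relation.ReflTransGen (fun a b => A a b ≠ 0) i₀ j with hR
  set S : Finset ι := univ.filter R with hSdef
  have hi₀S : i₀ ∈ S := Finset.mem_filter.mpr ⟨Finset.mem_univ _, Relation.ReflTransGen.refl⟩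
  have hS_T : ∀ j ∈ S, j ∈ TSet A := by
    intro j hj
    by_contra hjT
    have hreach : R j := by simpa [hSdef] using hj
    rcases reach_chain A hreach hjT with rfl | hc
    · exact hjT hi₀T
    · exact hnc hc
  have hS_closed : ∀ i ∈ S, ∀ j, A i j ≠ 0 → j ∈ S := by
    intro i hi j hij
    have hreach : R i := by simpa [hSdef] using hi
    have : R j := hreach.tail hij
    simp [hSdef, this]
  obtain ⟨d, hd, hSDD⟩ := hH
  obtain ⟨i, hiS, hmin⟩ := S.exists_min_image d ⟨i₀, hi₀S⟩
  have h1 := hSDD i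
  have hdiag : ‖(A * Matrix.diagonal fun k => ((d k : ℝ) : ℂ)) i i‖
      = ‖A i i‖ * d i := absMulDiag A d (fun k => (hd k).le) i i
  rw [hdiag, rowSum_mulDiag A d (fun k => (hd k).le) i] at h1
  -- lower bound the sum
  have hsub : S.erase i ⊆ univ.erase i := erase_subset_erase _ (subset_univ S)
  have hzero : ∀ j ∈ univ.erase i, j ∉ S.erase i → ‖A i j‖ * d j = 0 := by
    intro j hj hj'
    have hjne : j ≠ i := (mem_erase.mp hj).1
    have hjS : j ∉ S := fun hjS => hj' (mem_erase.mpr ⟨hjne, hjS⟩)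
    have : A i j = 0 := by
      by_contra hne
      exact hjS (hS_closed i hiS j hne)
    simp [this]
  have hsum_eq : ∑ j ∈ univ.erase i, ‖A i j‖ * d j
      = ∑ j ∈ S.erase i, ‖A i j‖ * d j :=
    (Finset.sum_subset hsub hzero).symm
  have hsum_eq2 : rowSum A i = ∑ j ∈ S.erase i, ‖A i j‖ := by
    unfold rowSum rowSumOn
    refine (Finset.sum_subset hsub ?_).symm
    intro j hj hj'
    have hjne : j ≠ i := (mem_erase.mp hj).1
    have hjS : j ∉ S := fun hjS => hj' (mem_erase.mpr ⟨hjne, hjS⟩)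
    have : A i j = 0 := by
      by_contra hne
      exact hjS (hS_closed i hiS j hne)
    simp [this]
  have hlow : d i * rowSum A i ≤ ∑ j ∈ S.erase i, ‖A i j‖ * d j := by
    rw [hsum_eq2, Finset.mul_sum]
    refine Finset.sum_le_sum fun j hj => ?_
    have hjS : j ∈ S := (mem_erase.mp hj).2
    have := hmin j hjS
    calc d i * ‖A i j‖ = ‖A i j‖ * d i := mul_comm _ _
      _ ≤ ‖A i j‖ * d j :=
        mul_le_mul_of_nonneg_left this (norm_nonneg _)
  have hiT : ‖A i i‖ ≤ rowSum A i := (mem_TSet_iff A i).mp (hS_T i hiS)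
  have : ‖A i i‖ * d i ≤ d i * rowSum A i := by
    rw [mul_comm]
    exact mul_le_mul_of_nonneg_left hiT (hd i).le
  rw [hsum_eq] at h1
  linarith [hlow]


-- Backward direction
lemma backward (A : Matrix ι ι ℂ) [Nonempty ι] (hDD : IsDD A)
    (h : TSet A = ∅ ∨ ∀ i₀ ∈ TSet A, HasChainOut A i₀) : IsHMatrix A := by
  classical
  by_cases hT : TSet A = ∅
  · refine ⟨fun _ => 1, fun _ => one_pos, ?_⟩
    have h1 : (fun i : ι => ((1 : ℝ) : ℂ)) = fun _ => (1 : ℂ) := by norm_num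
    rw [h1, Matrix.diagonal_one, Matrix.mul_one]
    intro i
    have : i ∉ TSet A := by simp [hT]
    rw [mem_TSet_iff] at this
    exact lt_of_not_ge this
  · have hchain : ∀ i₀ ∈ TSet A, HasChainOut A i₀ := h.resolve_left hT
    have hex : ∀ i, ∃ r, ChainLen A i r := by
      intro i
      by_cases hi : i ∈ TSet A
      · obtain ⟨r, -, hc⟩ := (hasChainOut_iff A i).mp (hchain i hi)
        exact ⟨r, hc⟩
      · exact ⟨0, (chainLen_zero_iff A i).mpr hi⟩
    set dist : ι → ℕ := fun i => Nat.find (hex i) with hdist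
    have hdist_spec : ∀ i, ChainLen A i (dist i) := fun i => Nat.find_spec (hex i)
    have hdist_min : ∀ i r, r < dist i → ¬ ChainLen A i r := by
      intro i r hr
      exact Nat.find_min (hex i) hr
    have hdist0 : ∀ i, i ∉ TSet A → dist i = 0 := by
      intro i hi
      exact Nat.le_zero.mp (Nat.find_le ((chainLen_zero_iff A i).mpr hi))
    have hdist_pos : ∀ i, i ∈ TSet A → 0 < dist i := by
      intro i hi
      rcases Nat.eq_zero_or_pos (dist i) with h0 | h0
      · have := hdist_spec i
        rw [h0] at this
        exact absurd hi ((chainLen_zero_iff A i).mp this)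
      · exact h0
    have hstep : ∀ i ∈ TSet A, ∃ j, j ≠ i ∧ A i j ≠ 0 ∧ dist j + 1 ≤ dist i := by
      intro i hi
      obtain ⟨m, hm⟩ := Nat.exists_eq_succ_of_ne_zero (Nat.pos_iff_ne_zero.mp (hdist_pos i hi))
      have hc := hdist_spec i
      rw [hm] at hc
      obtain ⟨j, hij, hcj⟩ := chainLen_tail A hc
      refine ⟨j, ?_, hij, ?_⟩
      · exact fun hji => hdist_min i m (by omega) (hji ▸ hcj)
      · have : dist j ≤ m := Nat.find_le hcj
        omega
    choose jf hjf_ne hjf_nz hjf_lt using hstep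
    -- positivity bounds
    have hTrow : ∀ i (hi : i ∈ TSet A), rowSum A i = ‖A i i‖ := by
      intro i hi
      exact le_antisymm (hDD i) ((mem_TSet_iff A i).mp hi)
    have hTrow_pos : ∀ i (hi : i ∈ TSet A), 0 < rowSum A i := by
      intro i hi
      have hjmem : jf i hi ∈ Finset.univ.erase i :=
        Finset.mem_erase.mpr ⟨hjf_ne i hi, Finset.mem_univ _⟩
      have h1 : ‖A i (jf i hi)‖ ≤ rowSum A i :=
        Finset.single_le_sum (f := fun x => ‖A i x‖)
          (fun j _ => norm_nonneg _) hjmem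
      have h2 : 0 < ‖A i (jf i hi)‖ :=
        norm_pos_iff.mpr (hjf_nz i hi)
      linarith
    have hNrow_pos : ∀ i, i ∉ TSet A → 0 < ‖A i i‖ := by
      intro i hi
      rw [mem_TSet_iff, not_le] at hi
      exact lt_of_le_of_lt (rowSum_nonneg A i) hi
    set g : ι → ℝ := fun i =>
      if hi : i ∈ TSet A then ‖A i (jf i hi)‖ / rowSum A i
      else (‖A i i‖ - rowSum A i) / ‖A i i‖ with hg
    have hgpos : ∀ i, 0 < g i := by
      intro i
      by_cases hi : i ∈ TSet A
      · simp only [hg, dif_pos hi]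
        exact div_pos (norm_pos_iff.mpr (hjf_nz i hi)) (hTrow_pos i hi)
      · simp only [hg, dif_neg hi]
        have h1 := hNrow_pos i hi
        have h2 : rowSum A i < ‖A i i‖ := by
          rw [mem_TSet_iff, not_le] at hi; exact hi
        exact div_pos (by linarith) h1
    set ε : ℝ := min (Finset.univ.inf' Finset.univ_nonempty g) 1 / 2 with hε
    have hinf_pos : 0 < Finset.univ.inf' Finset.univ_nonempty g := by
      rw [Finset.lt_inf'_iff]
      exact fun i _ => hgpos i
    have hε0 : 0 < ε := by
      rw [hε]
      have : (0:ℝ) < min (Finset.univ.inf' Finset.univ_nonempty g) 1 := lt_min hinf_pos one_pos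
      linarith
    have hε1 : ε < 1 := by
      rw [hε]
      have : min (Finset.univ.inf' Finset.univ_nonempty g) 1 ≤ 1 := min_le_right _ _
      linarith
    have hεg : ∀ i, ε < g i := by
      intro i
      have h1 : Finset.univ.inf' Finset.univ_nonempty g ≤ g i :=
        Finset.inf'_le _ (Finset.mem_univ i)
      have h2 : min (Finset.univ.inf' Finset.univ_nonempty g) 1 ≤ Finset.univ.inf' Finset.univ_nonempty g :=
        min_le_left _ _
      rw [hε]
      linarith
    set d : ι → ℝ := fun i => 1 - ε ^ (dist i + 1) with hd
    have hd_pos : ∀ i, 0 < d i := by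
      intro i
      rw [hd]
      have : ε ^ (dist i + 1) < 1 := pow_lt_one₀ hε0.le hε1 (Nat.succ_ne_zero _)
      simpa using this
    have hd_le1 : ∀ i, d i ≤ 1 := by
      intro i
      rw [hd]
      have : 0 ≤ ε ^ (dist i + 1) := pow_nonneg hε0.le _
      simpa using this
    refine ⟨d, hd_pos, ?_⟩
    intro i
    rw [absMulDiag A d (fun k => (hd_pos k).le) i i,
        rowSum_mulDiag A d (fun k => (hd_pos k).le) i]
    by_cases hi : i ∈ TSet A
    · -- strict domination on T rows
      set j := jf i hi with hj
      have hεrow : ε * rowSum A i < ‖A i j‖ := by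
        have h := hεg i
        simp only [hg, dif_pos hi] at h
        rw [lt_div_iff₀ (hTrow_pos i hi)] at h
        linarith [h]
      have hrow_eq : rowSum A i = ∑ x ∈ Finset.univ.erase i, ‖A i x‖ := rfl
      have key : ε ^ (dist i + 1) * rowSum A i
          < ∑ x ∈ Finset.univ.erase i, ‖A i x‖ * ε ^ (dist x + 1) := by
        have hjd : dist j + 1 ≤ dist i := hjf_lt i hi
        have hpow : ε ^ (dist i) ≤ ε ^ (dist j + 1) :=
          pow_le_pow_of_le_one hε0.le hε1.le hjd
        have h1 : ε ^ (dist i + 1) * rowSum A i < ε ^ (dist i) * ‖A i j‖ := by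
          have hεpow : 0 < ε ^ (dist i) := pow_pos hε0 _
          calc ε ^ (dist i + 1) * rowSum A i = ε ^ (dist i) * (ε * rowSum A i) := by ring
            _ < ε ^ (dist i) * ‖A i j‖ :=
                mul_lt_mul_of_pos_left hεrow hεpow
        have h2 : ε ^ (dist i) * ‖A i j‖
            ≤ ‖A i j‖ * ε ^ (dist j + 1) := by
          rw [mul_comm]
          exact mul_le_mul_of_nonneg_left hpow (norm_nonneg _)
        have h3 : ‖A i j‖ * ε ^ (dist j + 1)
            ≤ ∑ x ∈ Finset.univ.erase i, ‖A i x‖ * ε ^ (dist x + 1) := by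
          refine Finset.single_le_sum (f := fun x => ‖A i x‖ * ε ^ (dist x + 1))
            (fun x _ => ?_) ?_
          · exact mul_nonneg (norm_nonneg _) (pow_nonneg hε0.le _)
          · exact Finset.mem_erase.mpr ⟨hjf_ne i hi, Finset.mem_univ _⟩
        linarith
      have hexpand : ∑ x ∈ Finset.univ.erase i, ‖A i x‖ * d x
          = rowSum A i - ∑ x ∈ Finset.univ.erase i, ‖A i x‖ * ε ^ (dist x + 1) := by
        rw [hrow_eq, ← Finset.sum_sub_distrib]
        refine Finset.sum_congr rfl fun x _ => ?_
        simp only [hd]; ring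
      have hdi : d i = 1 - ε ^ (dist i + 1) := rfl
      rw [hexpand, ← hTrow i hi, hdi]
      nlinarith [key, hTrow_pos i hi]
    · -- strictly dominant rows
      have hd_i : d i = 1 - ε := by
        have h0 : d i = 1 - ε ^ (dist i + 1) := rfl
        rw [hdist0 i hi] at h0
        simpa using h0
      have hub : ∑ x ∈ Finset.univ.erase i, ‖A i x‖ * d x ≤ rowSum A i := by
        refine Finset.sum_le_sum fun x _ => ?_
        calc ‖A i x‖ * d x ≤ ‖A i x‖ * 1 :=
              mul_le_mul_of_nonneg_left (hd_le1 x) (norm_nonneg _)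
          _ = ‖A i x‖ := mul_one _
      have hεa : ε * ‖A i i‖ < ‖A i i‖ - rowSum A i := by
        have h := hεg i
        simp only [hg, dif_neg hi] at h
        rw [lt_div_iff₀ (hNrow_pos i hi)] at h
        linarith
      rw [hd_i]
      have hexp : ‖A i i‖ * (1 - ε)
          = ‖A i i‖ - ε * ‖A i i‖ := by ring
      rw [hexp]
      linarith

end DDaux

/-- A DD matrix `A ∈ ℂⁿˣⁿ`, `n ≥ 2`, is an H-matrix iff
`T(A) = ∅` or every `i₀ ∈ T(A)` has a nonzero elements chain ending outside
`T(A)`. -/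
theorem dd_hmatrix_iff_chain (n : ℕ) (hn : 2 ≤ n)
    (A : Matrix (Fin n) (Fin n) ℂ) (hDD : IsDD A) :
    IsHMatrix A ↔ (TSet A = ∅ ∨ ∀ i₀ ∈ TSet A, HasChainOut A i₀) := by
  constructor
  · exact fun hH => DDaux.forward A hH
  · intro h
    have : Nonempty (Fin n) := ⟨⟨0, by omega⟩⟩
    exact DDaux.backward A hDD h

end
end

section
/- Let F ∈ ℂ^{n×n} be a block upper triangular matrix with square diagonal blocks R₁₁, R₂₂, …, R_mm (i.e., F = [R_jk] with R_jk = 0 for j > k). If every diagonal block R_jj, j ∈ {1,…,m}, is an H-matrix, then F is an H-matrix. -/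
open scoped BigOperators

noncomputable section

/-- A block upper triangular matrix (with respect to a
partition of `{1,…,n}` into consecutive blocks, coded by a monotone
surjection `blk : Fin n → Fin m`) whose diagonal blocks are all H-matrices,
is an H-matrix. -/
theorem block_triangular_hmatrix (n m : ℕ)
    (F : Matrix (Fin n) (Fin n) ℂ) (blk : Fin n → Fin m)
    (hmono : Monotone blk) (hsurj : Function.Surjective blk)
    (hzero : ∀ i j : Fin n, blk j < blk i → F i j = 0)
    (hblocks : ∀ l : Fin m,
      IsHMatrix (Matrix.of fun i j : {i : Fin n // blk i = l} => F i.val j.val)) :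
    IsHMatrix F := by
  classical
  rcases Nat.eq_zero_or_pos n with hn | hn
  · subst hn
    exact ⟨fun _ => 1, fun i => one_pos, fun i => i.elim0⟩
  choose dl hdl hsdd using hblocks
  set e : Fin n → ℝ := fun i => dl (blk i) ⟨i, rfl⟩ with he_def
  have he : ∀ i, 0 < e i := fun i => hdl _ _
  have key : ∀ (l : Fin m) (j : Fin n) (hj : blk j = l), dl l ⟨j, hj⟩ = e j := by
    intro l j hj; subst hj; rfl
  -- gap of row i within its block
  set g : Fin n → ℝ := fun i =>
    ‖F i i‖ * e i -
      ∑ j ∈ ((Finset.univ.filter fun j => blk j = blk i).erase i),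
        ‖F i j‖ * e j with hg_def
  have hg : ∀ i, 0 < g i := by
    intro i
    have h := hsdd (blk i) ⟨i, rfl⟩
    simp only [rowSum, rowSumOn, IsSDD, Matrix.mul_diagonal, Matrix.of_apply] at h
    have habs : ∀ (z : ℂ) (j : {j // blk j = blk i}),
        ‖z * (dl (blk i) j : ℂ)‖ = ‖z‖ * dl (blk i) j := by
      intro z j
      rw [norm_mul, Complex.norm_real, Real.norm_eq_abs, abs_of_pos (hdl _ _)]
    have hsubsum :
        ∑ j : {j // blk j = blk i}, ‖F i j.val‖ * dl (blk i) j
          = ∑ j ∈ Finset.univ.filter (fun j => blk j = blk i),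
              ‖F i j‖ * e j := by
      rw [Finset.sum_subtype (p := fun j => blk j = blk i)
        (Finset.univ.filter fun j => blk j = blk i)
        (fun x => by simp) (fun j => ‖F i j‖ * e j)]
      refine Finset.sum_congr rfl fun j _ => ?_
      rw [← key (blk i) j.1 j.2]
    have herase1 :
        ∑ j ∈ (Finset.univ.erase (⟨i, rfl⟩ : {j // blk j = blk i})),
            ‖F i j.val‖ * dl (blk i) j
          = (∑ j : {j // blk j = blk i}, ‖F i j.val‖ * dl (blk i) j)
              - ‖F i i‖ * e i := by
      rw [Finset.sum_erase_eq_sub (Finset.mem_univ _)]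
    have herase2 :
        ∑ j ∈ ((Finset.univ.filter fun j => blk j = blk i).erase i),
            ‖F i j‖ * e j
          = (∑ j ∈ Finset.univ.filter (fun j => blk j = blk i),
              ‖F i j‖ * e j) - ‖F i i‖ * e i := by
      rw [Finset.sum_erase_eq_sub (by simp)]
    have hsum : ∑ j ∈ (Finset.univ.erase (⟨i, rfl⟩ : {j // blk j = blk i})),
        ‖F i j.val * (dl (blk i) j : ℂ)‖
        = ∑ j ∈ ((Finset.univ.filter fun j => blk j = blk i).erase i),
            ‖F i j‖ * e j := by
      rw [herase2, ← hsubsum, ← herase1]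
      exact Finset.sum_congr rfl fun j _ => habs _ j
    rw [hsum, habs] at h
    simpa [hg_def, sub_pos] using h
  set B : Fin n → ℝ := fun i =>
    ∑ j ∈ Finset.univ.filter (fun j => blk j ≠ blk i), ‖F i j‖ * e j
    with hB_def
  have hB : ∀ i, 0 ≤ B i :=
    fun i => Finset.sum_nonneg fun j _ =>
      mul_nonneg (norm_nonneg _) (he j).le
  have hne : (Finset.univ : Finset (Fin n)).Nonempty := ⟨⟨0, hn⟩, Finset.mem_univ _⟩
  set t : ℝ := min 1 (Finset.univ.inf' hne fun i => g i / (B i + 1)) with ht_def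
  have ht0 : 0 < t := by
    refine lt_min one_pos ?_
    exact (Finset.lt_inf'_iff hne).mpr fun i _ =>
      div_pos (hg i) (by have := hB i; linarith)
  have ht1 : t ≤ 1 := min_le_left _ _
  have hti : ∀ i, t * (B i + 1) ≤ g i := by
    intro i
    have h1 : t ≤ g i / (B i + 1) :=
      le_trans (min_le_right _ _) (Finset.inf'_le _ (Finset.mem_univ i))
    have h2 : (0:ℝ) < B i + 1 := by have := hB i; linarith
    calc t * (B i + 1) ≤ g i / (B i + 1) * (B i + 1) := by
          exact mul_le_mul_of_nonneg_right h1 h2.le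
      _ = g i := div_mul_cancel₀ _ h2.ne'
  refine ⟨fun i => t ^ (blk i : ℕ) * e i,
    fun i => mul_pos (pow_pos ht0 _) (he i), fun i => ?_⟩
  -- goal: rowSum (F * diagonal ...) i < |diag entry|
  have habs2 : ∀ j : Fin n,
      ‖F i j * ((t ^ (blk j : ℕ) * e j : ℝ) : ℂ)‖
        = ‖F i j‖ * (t ^ (blk j : ℕ) * e j) := by
    intro j
    rw [norm_mul, Complex.norm_real, Real.norm_eq_abs,
      abs_of_pos (mul_pos (pow_pos ht0 _) (he j))]
  simp only [rowSum, rowSumOn, Matrix.mul_diagonal]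
  rw [habs2 i]
  have hsplit : ∑ j ∈ Finset.univ.erase i,
      ‖F i j * ((t ^ (blk j : ℕ) * e j : ℝ) : ℂ)‖
      = (∑ j ∈ ((Finset.univ.erase i).filter fun j => blk j = blk i),
          ‖F i j‖ * (t ^ (blk j : ℕ) * e j))
        + ∑ j ∈ ((Finset.univ.erase i).filter fun j => ¬ blk j = blk i),
          ‖F i j‖ * (t ^ (blk j : ℕ) * e j) := by
    rw [← Finset.sum_filter_add_sum_filter_not (Finset.univ.erase i)
      (fun j => blk j = blk i)]
    exact congrArg₂ (· + ·) (Finset.sum_congr rfl fun j _ => habs2 j)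
      (Finset.sum_congr rfl fun j _ => habs2 j)
  rw [hsplit]
  have hfe : (Finset.univ.erase i).filter (fun j => blk j = blk i)
      = (Finset.univ.filter fun j => blk j = blk i).erase i := by
    ext j; simp [and_comm]
  have heq : ∑ j ∈ ((Finset.univ.erase i).filter fun j => blk j = blk i),
      ‖F i j‖ * (t ^ (blk j : ℕ) * e j)
      = t ^ (blk i : ℕ) *
        ∑ j ∈ ((Finset.univ.filter fun j => blk j = blk i).erase i),
          ‖F i j‖ * e j := by
    rw [hfe, Finset.mul_sum]
    refine Finset.sum_congr rfl fun j hj => ?_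
    have : blk j = blk i := (Finset.mem_filter.mp (Finset.mem_of_mem_erase hj)).2
    rw [this]; ring
  have hfne : (Finset.univ.erase i).filter (fun j => ¬ blk j = blk i)
      = Finset.univ.filter fun j => blk j ≠ blk i := by
    ext j
    simp only [Finset.mem_filter, Finset.mem_erase, Finset.mem_univ, true_and,
      and_true, ne_eq]
    exact ⟨fun h => h.2, fun h => ⟨fun hji => h (by rw [hji]), h⟩⟩
  have hlt : ∑ j ∈ ((Finset.univ.erase i).filter fun j => ¬ blk j = blk i),
      ‖F i j‖ * (t ^ (blk j : ℕ) * e j)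
      ≤ t ^ ((blk i : ℕ) + 1) * B i := by
    rw [hfne, hB_def, Finset.mul_sum]
    refine Finset.sum_le_sum fun j hj => ?_
    have hjne : blk j ≠ blk i := (Finset.mem_filter.mp hj).2
    rcases lt_or_gt_of_ne hjne with hlt | hgt
    · rw [hzero i j hlt]
      simp only [norm_zero, zero_mul]
      positivity
    · have hle : (blk i : ℕ) + 1 ≤ (blk j : ℕ) := hgt
      have : t ^ (blk j : ℕ) ≤ t ^ ((blk i : ℕ) + 1) :=
        pow_le_pow_of_le_one ht0.le ht1 hle
      calc ‖F i j‖ * (t ^ (blk j : ℕ) * e j)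
          ≤ ‖F i j‖ * (t ^ ((blk i : ℕ) + 1) * e j) := by
            refine mul_le_mul_of_nonneg_left ?_ (norm_nonneg _)
            exact mul_le_mul_of_nonneg_right this (he j).le
        _ = t ^ ((blk i : ℕ) + 1) * (‖F i j‖ * e j) := by ring
  have hfinal : t ^ ((blk i : ℕ) + 1) * B i < t ^ (blk i : ℕ) * g i := by
    have h1 : t * B i < g i := by have := hti i; nlinarith [hB i, ht0]
    have h2 : (0:ℝ) < t ^ (blk i : ℕ) := pow_pos ht0 _
    calc t ^ ((blk i : ℕ) + 1) * B i = t ^ (blk i : ℕ) * (t * B i) := by ring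
      _ < t ^ (blk i : ℕ) * g i := by exact (mul_lt_mul_iff_right₀ h2).mpr h1
  have := heq
  calc (∑ j ∈ ((Finset.univ.erase i).filter fun j => blk j = blk i),
          ‖F i j‖ * (t ^ (blk j : ℕ) * e j))
        + ∑ j ∈ ((Finset.univ.erase i).filter fun j => ¬ blk j = blk i),
          ‖F i j‖ * (t ^ (blk j : ℕ) * e j)
      ≤ t ^ (blk i : ℕ) *
          (∑ j ∈ ((Finset.univ.filter fun j => blk j = blk i).erase i),
            ‖F i j‖ * e j) + t ^ ((blk i : ℕ) + 1) * B i := by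
        rw [heq]; exact add_le_add_right hlt _
    _ < t ^ (blk i : ℕ) *
          (∑ j ∈ ((Finset.univ.filter fun j => blk j = blk i).erase i),
            ‖F i j‖ * e j) + t ^ (blk i : ℕ) * g i := by
        exact add_lt_add_right hfinal _
    _ = ‖F i i‖ * (t ^ (blk i : ℕ) * e i) := by
        simp only [hg_def]; ring

end
end

section
/- Let A = [a_ij] ∈ ℂ^{n×n}, n ≥ 2, be a DD matrix such that for each i₀ ∈ T(A) there exists a nonzero elements chain a_{i₀i₁}, a_{i₁i₂}, …, a_{i_{r-1}i_r} with i_r ∈ N \ T(A) (or T(A) = ∅). Then all diagonal entries of A are nonzero. -/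
open scoped BigOperators

noncomputable section

/-- A DD matrix `A ∈ ℂⁿˣⁿ`, `n ≥ 2`, satisfying the
Shivakumar–Chew chain condition has nonzero diagonal entries. -/
theorem chain_condition_nonzero_diagonal (n : ℕ) (hn : 2 ≤ n)
    (A : Matrix (Fin n) (Fin n) ℂ) (hDD : IsDD A)
    (hchain : TSet A = ∅ ∨ ∀ i₀ ∈ TSet A, HasChainOut A i₀) :
    ∀ i, A i i ≠ 0 := by
  intro i hii
  have habs : ‖A i i‖ = 0 := by simp [hii]
  have hsum : rowSum A i = 0 := by
    have h1 := hDD i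
    rw [habs] at h1
    have h2 : 0 ≤ rowSum A i := by
      unfold rowSum rowSumOn
      exact Finset.sum_nonneg fun j _ => norm_nonneg _
    linarith
  -- all entries in row i vanish
  have hrow : ∀ j, A i j = 0 := by
    intro j
    by_cases hji : j = i
    · rw [hji]; exact hii
    · have : ‖A i j‖ = 0 := by
        simp only [rowSum, rowSumOn] at hsum
        exact (Finset.sum_eq_zero_iff_of_nonneg
          (fun k _ => norm_nonneg (A i k))).mp hsum j
          (by simp [Finset.mem_erase, hji])
      exact norm_eq_zero.mp this
  have hiT : i ∈ TSet A := by
    simp [TSet, habs, hsum]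
  rcases hchain with hempty | hch
  · rw [hempty] at hiT; exact absurd hiT (Finset.notMem_empty i)
  · obtain ⟨r, c, hr, hc0, hstep, _⟩ := hch i hiT
    have h := hstep ⟨0, hr⟩
    have : c (⟨0, hr⟩ : Fin r).castSucc = i := by
      simpa [Fin.castSucc] using hc0
    rw [this] at h
    exact h (hrow _)

end
end
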